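/- In an n-dimensional real inner product space E, every bounded set A with diameter d(A) = 1 satisfies r_E(A) ≤ √(n/(2(n+1))) (Jung's theorem). -/

import Mathlib

set_option maxHeartbeats 1000000

open Finset

lemma jung_finite {E : Type*} [NormedAddCommGroup E] [InnerProductSpace ℝ E]
    (m : ℕ) (hm : 0 < m) (x : Fin m → E) (hdist : ∀ i j, ‖x i - x j‖ ≤ 1) :
    ∃ y : E, ∀ j, ‖x j - y‖ ≤ Real.sqrt (((m : ℝ) - 1) / (2 * m)) := by
  classical
  set g : (Fin m → ℝ) → ℝ := fun w => ∑ i, w i * ‖x i‖ ^ 2 - ‖∑ i, w i • x i‖ ^ 2 with hg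
  have hcont : ContinuousOn g (stdSimplex ℝ (Fin m)) := by
    apply Continuous.continuousOn
    fun_prop
  obtain ⟨l, hl, hmax⟩ := (isCompact_stdSimplex ℝ (Fin m)).exists_isMaxOn
    ⟨Pi.single ⟨0, hm⟩ 1, single_mem_stdSimplex ℝ _⟩ hcont
  obtain ⟨hl0, hl1⟩ := hl
  set y : E := ∑ i, l i • x i with hy
  set S : ℝ := ∑ i, l i * ‖x i‖ ^ 2 with hS
  have hgl : g l = S - ‖y‖ ^ 2 := rfl
  have hg0 : 0 ≤ g l := by
    have := hmax (single_mem_stdSimplex ℝ (⟨0, hm⟩ : Fin m))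
    have h1 : g (Pi.single (⟨0, hm⟩ : Fin m) 1) = 0 := by
      simp [hg, Pi.single_apply, Finset.sum_ite_eq', ite_smul]
    simpa [h1] using this
  have hkey : ∀ j, ‖x j - y‖ ^ 2 ≤ g l := by
    intro j
    set Q : ℝ := ‖x j - y‖ ^ 2 with hQ
    have hQ0 : 0 ≤ Q := sq_nonneg _
    have step : ∀ t : ℝ, 0 ≤ t → t ≤ 1 → t * (Q - g l) ≤ t ^ 2 * Q := by
      intro t ht0 ht1
      set w : Fin m → ℝ := fun i => (1 - t) * l i + t * (if i = j then 1 else 0) with hw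
      have hwmem : w ∈ stdSimplex ℝ (Fin m) := by
        constructor
        · intro i
          have := hl0 i
          simp only [hw]
          split <;> nlinarith
        · simp [hw, Finset.sum_add_distrib, ← Finset.mul_sum, hl1, Finset.sum_ite_eq']
      have h1 : ∑ i, w i * ‖x i‖ ^ 2 = (1 - t) * S + t * ‖x j‖ ^ 2 := by
        simp [hw, add_mul, Finset.sum_add_distrib, ← Finset.mul_sum, mul_assoc, hS,
          ite_mul, Finset.sum_ite_eq']
      have h2 : ∑ i, w i • x i = y + t • (x j - y) := by
        simp only [hw, add_smul, Finset.sum_add_distrib, mul_smul, ← Finset.smul_sum,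
          ite_smul, one_smul, zero_smul, Finset.sum_ite_eq', Finset.mem_univ, if_pos]
        rw [sub_smul, one_smul, smul_sub, ← hy]
        abel
      have hineq := hmax hwmem
      simp only [Set.mem_setOf_eq, hg, h1, h2] at hineq
      rw [norm_add_sq_real, real_inner_smul_right, norm_smul, Real.norm_eq_abs, mul_pow,
        sq_abs, ← hQ, inner_sub_right, real_inner_self_eq_norm_sq, real_inner_comm,
        ← hS, ← hy] at hineq
      have hQex : Q = ‖x j‖ ^ 2 - 2 * inner ℝ (x j) y + ‖y‖ ^ 2 := by
        rw [hQ, norm_sub_sq_real]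
      rw [hgl, hQex]
      rw [hQex] at hineq
      nlinarith [hineq]
    by_contra hc
    push_neg at hc
    have hQpos : 0 < Q := lt_of_le_of_lt hg0 hc
    have htpos : 0 < min 1 ((Q - g l) / (2 * Q)) :=
      lt_min one_pos (div_pos (by linarith) (by positivity))
    have hstep := step _ htpos.le (min_le_left _ _)
    set t : ℝ := min 1 ((Q - g l) / (2 * Q)) with ht
    have h2 : t * Q ≤ (Q - g l) / 2 := by
      have h3 : t ≤ (Q - g l) / (2 * Q) := min_le_right _ _
      calc t * Q ≤ (Q - g l) / (2 * Q) * Q := by nlinarith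
        _ = (Q - g l) / 2 := by field_simp
    nlinarith
  have hmpos : (0:ℝ) < m := by exact_mod_cast hm
  have hbound : g l ≤ ((m : ℝ) - 1) / (2 * m) := by
    have hinner : ‖y‖ ^ 2 = ∑ i, ∑ k, l i * l k * inner ℝ (x i) (x k) := by
      rw [← real_inner_self_eq_norm_sq, hy, sum_inner]
      simp only [inner_sum, real_inner_smul_left, real_inner_smul_right, mul_assoc]
      rw [Finset.sum_comm]
      exact Finset.sum_congr rfl fun a _ => Finset.sum_congr rfl fun b _ => by
        linear_combination (l a * l b) * real_inner_comm (x a) (x b)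
    have hiden : (2 : ℝ) * g l = ∑ i, ∑ k, l i * l k * ‖x i - x k‖ ^ 2 := by
      have hexp : ∀ i k : Fin m, l i * l k * ‖x i - x k‖ ^ 2
          = (l i * ‖x i‖ ^ 2) * l k + l i * (l k * ‖x k‖ ^ 2)
            - 2 * (l i * l k * inner ℝ (x i) (x k)) := by
        intro i k; rw [norm_sub_sq_real]; ring
      simp only [hexp, Finset.sum_add_distrib, Finset.sum_sub_distrib, ← Finset.mul_sum,
        ← Finset.sum_mul, hl1, one_mul, mul_one]
      rw [← hinner, ← hS, hgl]
      ring
    have hub : ∑ i, ∑ k, l i * l k * ‖x i - x k‖ ^ 2 ≤ 1 - ∑ i, l i ^ 2 := by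
      have hterm : ∀ i k : Fin m, l i * l k * ‖x i - x k‖ ^ 2
          ≤ l i * l k - (if i = k then l i ^ 2 else 0) := by
        intro i k
        by_cases h : i = k
        · subst h; simp [sq]
        · simp only [h, if_false, sub_zero]
          have h1 : ‖x i - x k‖ ^ 2 ≤ 1 := by
            have := hdist i k
            nlinarith [norm_nonneg (x i - x k)]
          nlinarith [mul_nonneg (hl0 i) (hl0 k)]
      calc ∑ i, ∑ k, l i * l k * ‖x i - x k‖ ^ 2
          ≤ ∑ i, ∑ k, (l i * l k - (if i = k then l i ^ 2 else 0)) :=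
            Finset.sum_le_sum fun i _ => Finset.sum_le_sum fun k _ => hterm i k
        _ = 1 - ∑ i, l i ^ 2 := by
            simp only [Finset.sum_sub_distrib, ← Finset.mul_sum, hl1, mul_one,
              Finset.sum_ite_eq, Finset.mem_univ, if_pos]
    have hlsq : (1 : ℝ) / m ≤ ∑ i, l i ^ 2 := by
      have := sq_sum_le_card_mul_sum_sq (s := (Finset.univ : Finset (Fin m))) (f := l)
      rw [hl1] at this
      simp only [Finset.card_univ, Fintype.card_fin] at this
      rw [div_le_iff₀ hmpos]
      nlinarith
    rw [le_div_iff₀ (by positivity)]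
    have h2g : 2 * g l ≤ 1 - 1 / (m:ℝ) := by linarith
    have hinv : (1 / (m:ℝ)) * m = 1 := by field_simp
    nlinarith [mul_le_mul_of_nonneg_right h2g hmpos.le]
  refine ⟨y, fun j => ?_⟩
  have hle : ‖x j - y‖ ^ 2 ≤ ((m : ℝ) - 1) / (2 * m) := le_trans (hkey j) hbound
  calc ‖x j - y‖ = Real.sqrt (‖x j - y‖ ^ 2) := by rw [Real.sqrt_sq (norm_nonneg _)]
    _ ≤ Real.sqrt (((m : ℝ) - 1) / (2 * m)) := Real.sqrt_le_sqrt hle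

noncomputable def chebRadius {H : Type*} [NormedAddCommGroup H] (A : Set H) : ℝ :=
  ⨅ y : H, ⨆ x : A, ‖(x : H) - y‖

theorem stmt1 {E : Type*} [NormedAddCommGroup E] [InnerProductSpace ℝ E]
    [FiniteDimensional ℝ E] (n : ℕ) (hn : Module.finrank ℝ E = n)
    (A : Set E) (hb : Bornology.IsBounded A) (hd : Metric.diam A = 1) :
    chebRadius A ≤ Real.sqrt (n / (2 * (n + 1))) := by
  classical
  set r : ℝ := Real.sqrt ((n : ℝ) / (2 * (n + 1))) with hr
  have hr0 : (0:ℝ) ≤ r := Real.sqrt_nonneg _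
  have hy : ∃ y : E, ∀ a : A, y ∈ Metric.closedBall (a : E) r := by
    have hH := Convex.helly_theorem_compact' (𝕜 := ℝ) (ι := A)
      (F := fun a => Metric.closedBall (a : E) r)
      (fun a => convex_closedBall _ _) (fun a => isCompact_closedBall _ _) ?_
    · obtain ⟨y, hy⟩ := hH
      exact ⟨y, fun a => Set.mem_iInter.mp hy a⟩
    · intro I hI
      rcases I.eq_empty_or_nonempty with rfl | hne
      · simp
      set m := I.card with hmdef
      have hm : 0 < m := Finset.card_pos.mpr hne
      set e := I.equivFin with he
      set x : Fin m → E := fun k => ((e.symm k : ↥A) : E) with hx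
      have hdist : ∀ k l, ‖x k - x l‖ ≤ 1 := by
        intro k l
        rw [← dist_eq_norm, ← hd]
        exact Metric.dist_le_diam_of_mem hb (e.symm k).1.2 (e.symm l).1.2
      obtain ⟨y, hy⟩ := jung_finite m hm x hdist
      refine ⟨y, Set.mem_iInter₂.mpr fun i hi => ?_⟩
      have hxi : x (e ⟨i, hi⟩) = (i : E) := by simp [hx]
      have h1 : ‖x (e ⟨i, hi⟩) - y‖ ≤ Real.sqrt (((m : ℝ) - 1) / (2 * m)) := hy _
      have h2 : Real.sqrt (((m : ℝ) - 1) / (2 * m)) ≤ r := by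
        apply Real.sqrt_le_sqrt
        have hm1 : (1:ℝ) ≤ m := by exact_mod_cast hm
        have hmn : (m:ℝ) ≤ (n:ℝ) + 1 := by
          have : m ≤ n + 1 := by rw [hn] at hI; exact hI
          exact_mod_cast this
        rw [div_le_div_iff₀ (by positivity) (by positivity)]
        nlinarith
      rw [Metric.mem_closedBall, dist_comm, dist_eq_norm, ← hxi]
      exact le_trans h1 h2
  obtain ⟨y, hy⟩ := hy
  have hnn : ∀ z : E, 0 ≤ ⨆ x : A, ‖(x : E) - z‖ :=
    fun z => Real.iSup_nonneg fun x => norm_nonneg _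
  have hbdd : BddBelow (Set.range fun z : E => ⨆ x : A, ‖(x : E) - z‖) := by
    refine ⟨0, ?_⟩
    rintro v ⟨z, rfl⟩
    exact hnn z
  refine le_trans (ciInf_le hbdd y) (Real.iSup_le (fun a => ?_) hr0)
  have := hy a
  rw [Metric.mem_closedBall, dist_comm, dist_eq_norm] at this
  exact this
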